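/- arXiv:1611.00462 — 2 statements merged into one kernel-verified Lean document; each statement's English description precedes it below -/
import Mathlib

section
/- For every real number λ ≥ 0 and every complex number z ∈ ℂ \ (0,∞), one has |λ − z| ≥ √|z| · Im(√z), where √z denotes the branch of the square root with nonnegative imaginary part. -/
/-- For every real `λ ≥ 0` and every complex `z ∉ (0,∞)`, one has
`|λ − z| ≥ √|z| · Im √z`, where `√z` is any square root of `z` with
nonnegative imaginary part. -/
theorem stmt_0 (l : ℝ) (hl : 0 ≤ l) (z : ℂ) (hz : ¬ (z.im = 0 ∧ 0 < z.re))
    (w : ℂ) (hw : w ^ 2 = z) (hwim : 0 ≤ w.im) :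
    Real.sqrt (‖z‖) * w.im ≤ ‖(l : ℂ) - z‖ := by
  set a := w.re with ha
  set b := w.im with hb
  have hzre : z.re = a ^ 2 - b ^ 2 := by
    rw [← hw]; simp [pow_two, Complex.mul_re]; rfl
  have hzim : z.im = 2 * a * b := by
    rw [← hw]; simp [pow_two, Complex.mul_im]; ring
  have habs : ‖z‖ = a ^ 2 + b ^ 2 := by
    rw [← hw, norm_pow, Complex.sq_norm, Complex.normSq_apply]; ring
  have h1 : ‖(l : ℂ) - z‖
      = Real.sqrt ((l - (a ^ 2 - b ^ 2)) ^ 2 + (2 * a * b) ^ 2) := by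
    rw [Complex.norm_def, Complex.normSq_apply]
    simp [hzre, hzim]
    ring_nf
  have h2 : Real.sqrt (‖z‖) * b
      = Real.sqrt ((a ^ 2 + b ^ 2) * b ^ 2) := by
    rw [habs, Real.sqrt_mul (by positivity), Real.sqrt_sq hwim]
  rw [h1, h2]
  apply Real.sqrt_le_sqrt
  nlinarith [sq_nonneg (l - a ^ 2), mul_nonneg hl (sq_nonneg b), sq_nonneg (a * b)]
end

section
/- Let (X, μ) be a measure space, 1 ≤ p ≤ r' < ∞ with 1 + 1/q = 1/p + 1/r, and let k be a measurable kernel with M₁ := ess-sup_x ‖k(x,·)‖_r < ∞ and M₂ := ess-sup_y ‖k(·,y)‖_r < ∞. Then for all u ∈ L^p and v ∈ L^{q'}, |∬ v(x) k(x,y) u(y) dμ(x) dμ(y)| ≤ M₁^{r/q' − r/r'} M₂^{r/p − r/r'} ‖v‖_{q'} ‖u‖_p. -/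
open MeasureTheory ENNReal NNReal

lemma split_helper (A B C : ℝ≥0∞) {P Q R a b c : ℝ}
    (ha : 0 ≤ a) (hb : 0 ≤ b) (hc : 0 ≤ c)
    (hP : 0 ≤ P) (hQ : 0 ≤ Q) (hR : 0 ≤ R)
    (h1 : Q * (a + c) = 1) (h2 : R * (a + b) = 1) (h3 : P * (b + c) = 1) :
    A * B * C = (A ^ Q * B ^ R) ^ a * ((B ^ R * C ^ P) ^ b * (A ^ Q * C ^ P) ^ c) := by
  have eA : A = A ^ (Q * a) * A ^ (Q * c) := by
    rw [← ENNReal.rpow_add_of_nonneg _ _ (mul_nonneg hQ ha) (mul_nonneg hQ hc), ← mul_add, h1,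
      ENNReal.rpow_one]
  have eB : B = B ^ (R * a) * B ^ (R * b) := by
    rw [← ENNReal.rpow_add_of_nonneg _ _ (mul_nonneg hR ha) (mul_nonneg hR hb), ← mul_add, h2,
      ENNReal.rpow_one]
  have eC : C = C ^ (P * b) * C ^ (P * c) := by
    rw [← ENNReal.rpow_add_of_nonneg _ _ (mul_nonneg hP hb) (mul_nonneg hP hc), ← mul_add, h3,
      ENNReal.rpow_one]
  rw [ENNReal.mul_rpow_of_nonneg _ _ ha, ENNReal.mul_rpow_of_nonneg _ _ hb,
    ENNReal.mul_rpow_of_nonneg _ _ hc, ← ENNReal.rpow_mul, ← ENNReal.rpow_mul,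
    ← ENNReal.rpow_mul, ← ENNReal.rpow_mul, ← ENNReal.rpow_mul, ← ENNReal.rpow_mul]
  conv_lhs => rw [eA, eB, eC]
  ring

lemma stmt_5_aux {X : Type*} [MeasurableSpace X] (μ : Measure X)
    (p q r r' q' : ℝ) (hp1 : 1 ≤ p) (hpr : p ≤ r') (hr1 : 1 < r)
    (hrr' : 1 / r + 1 / r' = 1) (hqq' : 1 / q + 1 / q' = 1)
    (hq : 1 + 1 / q = 1 / p + 1 / r)
    (k : X → X → ℂ) (hk : Measurable (Function.uncurry k))
    (M₁ M₂ : ℝ) (hM₁0 : 0 ≤ M₁) (hM₂0 : 0 ≤ M₂)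
    (hM₁ : ∀ᵐ x ∂μ, eLpNorm (fun y => k x y) (ENNReal.ofReal r) μ ≤ ENNReal.ofReal M₁)
    (hM₂ : ∀ᵐ y ∂μ, eLpNorm (fun x => k x y) (ENNReal.ofReal r) μ ≤ ENNReal.ofReal M₂)
    (u v : X → ℂ) (hum : StronglyMeasurable u) (hvm : StronglyMeasurable v)
    (hu : MemLp u (ENNReal.ofReal p) μ) (hv : MemLp v (ENNReal.ofReal q') μ) :
    ‖∫ x, ∫ y, v x * k x y * u y ∂μ ∂μ‖
      ≤ M₁ ^ (r / q' - r / r') * M₂ ^ (r / p - r / r')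
          * (eLpNorm v (ENNReal.ofReal q') μ).toReal
          * (eLpNorm u (ENNReal.ofReal p) μ).toReal := by
  -- elementary exponent facts
  have hp0 : 0 < p := lt_of_lt_of_le zero_lt_one hp1
  have hr0 : 0 < r := zero_lt_one.trans hr1
  have hinvr : 1 / r < 1 := by rw [div_lt_one hr0]; exact hr1
  have hinvp : 1 / p ≤ 1 := by rw [div_le_one hp0]; exact hp1
  have hr'inv : 0 < 1 / r' := by linarith
  have hr'0 : 0 < r' := one_div_pos.mp hr'inv
  have hr'p : 1 / r' ≤ 1 / p := one_div_le_one_div_of_le hp0 hpr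
  have hqinv : 0 ≤ 1 / q := by linarith
  have hinvq' : 1 / q' = 2 - 1 / p - 1 / r := by linarith
  have hq'invpos : 0 < 1 / q' := by rw [hinvq']; linarith
  have hq'0 : 0 < q' := one_div_pos.mp hq'invpos
  set a : ℝ := 1 - 1 / p with ha_def
  set b : ℝ := 1 / p + 1 / r - 1 with hb_def
  set c : ℝ := 1 - 1 / r with hc_def
  have ha : 0 ≤ a := by rw [ha_def]; linarith
  have hb : 0 ≤ b := by rw [hb_def]; linarith
  have hc : 0 ≤ c := by rw [hc_def]; linarith
  have h1 : q' * (a + c) = 1 := by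
    have : a + c = 1 / q' := by rw [ha_def, hc_def, hinvq']; ring
    rw [this, mul_one_div_cancel hq'0.ne']
  have h2 : r * (a + b) = 1 := by
    have : a + b = 1 / r := by rw [ha_def, hb_def]; ring
    rw [this, mul_one_div_cancel hr0.ne']
  have h3 : p * (b + c) = 1 := by
    have : b + c = 1 / p := by rw [hb_def, hc_def]; ring
    rw [this, mul_one_div_cancel hp0.ne']
  have h_ra : r / q' - r / r' = r * a := by
    have e2 : 1 / r' = 1 - 1 / r := by linarith
    have : r / q' = r * (1 / q') := by ring
    rw [this, show r / r' = r * (1 / r') by ring, hinvq', e2, ha_def]; ring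
  have h_rb : r / p - r / r' = r * b := by
    have e2 : 1 / r' = 1 - 1 / r := by linarith
    rw [show r / p = r * (1 / p) by ring, show r / r' = r * (1 / r') by ring, e2, hb_def]; ring
  have hrne0 : (ENNReal.ofReal r) ≠ 0 := (ENNReal.ofReal_pos.mpr hr0).ne'
  have hpne0 : (ENNReal.ofReal p) ≠ 0 := (ENNReal.ofReal_pos.mpr hp0).ne'
  have hq'ne0 : (ENNReal.ofReal q') ≠ 0 := (ENNReal.ofReal_pos.mpr hq'0).ne'
  -- sigma-finite carriers
  obtain ⟨S, hSm, hvS, hSsf⟩ :=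
    (hv.finStronglyMeasurable_of_stronglyMeasurable hvm hq'ne0 ofReal_ne_top).exists_set_sigmaFinite
  obtain ⟨T, hTm, huT, hTsf⟩ :=
    (hu.finStronglyMeasurable_of_stronglyMeasurable hum hpne0 ofReal_ne_top).exists_set_sigmaFinite
  set ν₁ := μ.restrict S with hν₁
  set ν₂ := μ.restrict T with hν₂
  haveI : SigmaFinite ν₁ := hSsf
  haveI : SigmaFinite ν₂ := hTsf
  have hvmeas : Measurable v := hvm.measurable
  have humeas : Measurable u := hum.measurable
  -- restrict the integrals
  have hinner : ∀ x, ∫ y, v x * k x y * u y ∂μ = ∫ y, v x * k x y * u y ∂ν₂ := by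
    intro x
    have : (fun y => v x * k x y * u y) = T.indicator (fun y => v x * k x y * u y) := by
      funext y
      by_cases hy : y ∈ T
      · rw [Set.indicator_of_mem hy]
      · rw [Set.indicator_of_notMem hy, huT y hy, mul_zero]
    calc ∫ y, v x * k x y * u y ∂μ = ∫ y, T.indicator (fun y => v x * k x y * u y) y ∂μ := by
          rw [← this]
      _ = ∫ y in T, v x * k x y * u y ∂μ := integral_indicator hTm
      _ = ∫ y, v x * k x y * u y ∂ν₂ := by rw [← hν₂]
  have houter : ∫ x, (∫ y, v x * k x y * u y ∂ν₂) ∂μ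
      = ∫ x, (∫ y, v x * k x y * u y ∂ν₂) ∂ν₁ := by
    have : (fun x => ∫ y, v x * k x y * u y ∂ν₂)
        = S.indicator (fun x => ∫ y, v x * k x y * u y ∂ν₂) := by
      funext x
      by_cases hx : x ∈ S
      · rw [Set.indicator_of_mem hx]
      · rw [Set.indicator_of_notMem hx]
        simp [hvS x hx]
    calc ∫ x, (∫ y, v x * k x y * u y ∂ν₂) ∂μ
        = ∫ x, S.indicator (fun x => ∫ y, v x * k x y * u y ∂ν₂) x ∂μ := by rw [← this]
      _ = ∫ x in S, (∫ y, v x * k x y * u y ∂ν₂) ∂μ := integral_indicator hSm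
      _ = ∫ x, (∫ y, v x * k x y * u y ∂ν₂) ∂ν₁ := by rw [← hν₁]
  have hswitch : (∫ x, ∫ y, v x * k x y * u y ∂μ ∂μ)
      = ∫ x, ∫ y, v x * k x y * u y ∂ν₂ ∂ν₁ := by
    calc (∫ x, ∫ y, v x * k x y * u y ∂μ ∂μ)
        = ∫ x, ∫ y, v x * k x y * u y ∂ν₂ ∂μ := by simp only [hinner]
      _ = _ := houter
  -- measurable pieces
  have hKm : Measurable fun z : X × X => (‖k z.1 z.2‖₊ : ℝ≥0∞) := hk.enorm
  have hVm : Measurable fun z : X × X => (‖v z.1‖₊ : ℝ≥0∞) := (hvmeas.comp measurable_fst).enorm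
  have hUm : Measurable fun z : X × X => (‖u z.2‖₊ : ℝ≥0∞) := (humeas.comp measurable_snd).enorm
  set F0 : X × X → ℝ≥0∞ := fun z => (‖v z.1‖₊ : ℝ≥0∞) ^ q' * (‖k z.1 z.2‖₊ : ℝ≥0∞) ^ r with hF0
  set F1 : X × X → ℝ≥0∞ := fun z => (‖k z.1 z.2‖₊ : ℝ≥0∞) ^ r * (‖u z.2‖₊ : ℝ≥0∞) ^ p with hF1
  set F2 : X × X → ℝ≥0∞ := fun z => (‖v z.1‖₊ : ℝ≥0∞) ^ q' * (‖u z.2‖₊ : ℝ≥0∞) ^ p with hF2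
  have hF0m : Measurable F0 := (hVm.pow_const q').mul (hKm.pow_const r)
  have hF1m : Measurable F1 := (hKm.pow_const r).mul (hUm.pow_const p)
  have hF2m : Measurable F2 := (hVm.pow_const q').mul (hUm.pow_const p)
  set V := ∫⁻ x, (‖v x‖₊ : ℝ≥0∞) ^ q' ∂ν₁ with hV
  set U := ∫⁻ y, (‖u y‖₊ : ℝ≥0∞) ^ p ∂ν₂ with hU
  set K₁ := (ENNReal.ofReal M₁) ^ r with hK₁
  set K₂ := (ENNReal.ofReal M₂) ^ r with hK₂
  -- slice bounds
  have hker1 : ∀ x, eLpNorm (fun y => k x y) (ENNReal.ofReal r) μ ≤ ENNReal.ofReal M₁ →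
      ∫⁻ y, (‖k x y‖₊ : ℝ≥0∞) ^ r ∂ν₂ ≤ K₁ := by
    intro x hx
    have h1 : ∫⁻ y, (‖k x y‖₊ : ℝ≥0∞) ^ r ∂ν₂ ≤ ∫⁻ y, (‖k x y‖₊ : ℝ≥0∞) ^ r ∂μ :=
      lintegral_mono' Measure.restrict_le_self le_rfl
    have h2 : ∫⁻ y, (‖k x y‖₊ : ℝ≥0∞) ^ r ∂μ
        = (eLpNorm (fun y => k x y) (ENNReal.ofReal r) μ) ^ r := by
      rw [eLpNorm_eq_lintegral_rpow_enorm_toReal hrne0 ofReal_ne_top, ENNReal.toReal_ofReal hr0.le,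
        ← ENNReal.rpow_mul, one_div, inv_mul_cancel₀ hr0.ne', ENNReal.rpow_one]; rfl
    exact (h1.trans_eq h2).trans (ENNReal.rpow_le_rpow hx hr0.le)
  have hker2 : ∀ y, eLpNorm (fun x => k x y) (ENNReal.ofReal r) μ ≤ ENNReal.ofReal M₂ →
      ∫⁻ x, (‖k x y‖₊ : ℝ≥0∞) ^ r ∂ν₁ ≤ K₂ := by
    intro y hy
    have h1 : ∫⁻ x, (‖k x y‖₊ : ℝ≥0∞) ^ r ∂ν₁ ≤ ∫⁻ x, (‖k x y‖₊ : ℝ≥0∞) ^ r ∂μ :=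
      lintegral_mono' Measure.restrict_le_self le_rfl
    have h2 : ∫⁻ x, (‖k x y‖₊ : ℝ≥0∞) ^ r ∂μ
        = (eLpNorm (fun x => k x y) (ENNReal.ofReal r) μ) ^ r := by
      rw [eLpNorm_eq_lintegral_rpow_enorm_toReal hrne0 ofReal_ne_top, ENNReal.toReal_ofReal hr0.le,
        ← ENNReal.rpow_mul, one_div, inv_mul_cancel₀ hr0.ne', ENNReal.rpow_one]; rfl
    exact (h1.trans_eq h2).trans (ENNReal.rpow_le_rpow hy hr0.le)
  -- bounds on the three Hölder factors
  have hE0 : ∫⁻ z, F0 z ∂(ν₁.prod ν₂) ≤ K₁ * V := by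
    rw [lintegral_prod _ hF0m.aemeasurable]
    calc ∫⁻ x, ∫⁻ y, F0 (x, y) ∂ν₂ ∂ν₁
        = ∫⁻ x, (‖v x‖₊ : ℝ≥0∞) ^ q' * ∫⁻ y, (‖k x y‖₊ : ℝ≥0∞) ^ r ∂ν₂ ∂ν₁ := by
          refine lintegral_congr fun x => ?_
          have hkx : Measurable fun y => (‖k x y‖₊ : ℝ≥0∞) ^ r :=
            ((hk.comp measurable_prodMk_left).enorm).pow_const r
          simp only [hF0]
          exact lintegral_const_mul _ hkx
      _ ≤ ∫⁻ x, K₁ * (‖v x‖₊ : ℝ≥0∞) ^ q' ∂ν₁ := by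
          refine lintegral_mono_ae ?_
          filter_upwards [ae_restrict_of_ae hM₁] with x hx
          rw [mul_comm K₁]
          exact mul_le_mul_right (hker1 x hx) _
      _ = K₁ * V := lintegral_const_mul _ (hvmeas.enorm.pow_const q')
  have hE1 : ∫⁻ z, F1 z ∂(ν₁.prod ν₂) ≤ K₂ * U := by
    rw [lintegral_prod_symm _ hF1m.aemeasurable]
    calc ∫⁻ y, ∫⁻ x, F1 (x, y) ∂ν₁ ∂ν₂
        = ∫⁻ y, (∫⁻ x, (‖k x y‖₊ : ℝ≥0∞) ^ r ∂ν₁) * (‖u y‖₊ : ℝ≥0∞) ^ p ∂ν₂ := by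
          refine lintegral_congr fun y => ?_
          have hky : Measurable fun x => (‖k x y‖₊ : ℝ≥0∞) ^ r :=
            ((hk.comp measurable_prodMk_right).enorm).pow_const r
          simp only [hF1]
          exact lintegral_mul_const _ hky
      _ ≤ ∫⁻ y, K₂ * (‖u y‖₊ : ℝ≥0∞) ^ p ∂ν₂ := by
          refine lintegral_mono_ae ?_
          filter_upwards [ae_restrict_of_ae hM₂] with y hy
          exact mul_le_mul_left (hker2 y hy) _
      _ = K₂ * U := lintegral_const_mul _ (humeas.enorm.pow_const p)
  have hE2 : ∫⁻ z, F2 z ∂(ν₁.prod ν₂) = V * U :=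
    lintegral_prod_mul (hvmeas.enorm.pow_const q').aemeasurable
      (humeas.enorm.pow_const p).aemeasurable
  -- Hölder inequality with three factors
  have hHolder : ∫⁻ z : X × X, (‖v z.1‖₊ : ℝ≥0∞) * ‖k z.1 z.2‖₊ * ‖u z.2‖₊ ∂(ν₁.prod ν₂)
      ≤ (∫⁻ z, F0 z ∂(ν₁.prod ν₂)) ^ a *
        ((∫⁻ z, F1 z ∂(ν₁.prod ν₂)) ^ b * (∫⁻ z, F2 z ∂(ν₁.prod ν₂)) ^ c) := by
    have hpt : ∀ z : X × X, (‖v z.1‖₊ : ℝ≥0∞) * ‖k z.1 z.2‖₊ * ‖u z.2‖₊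
        = F0 z ^ a * (F1 z ^ b * F2 z ^ c) := fun z =>
      split_helper _ _ _ ha hb hc hp0.le hq'0.le hr0.le h1 h2 h3
    refine le_trans (le_of_eq (lintegral_congr hpt)) ?_
    have H := ENNReal.lintegral_prod_norm_pow_le (μ := ν₁.prod ν₂) Finset.univ
      (f := ![F0, F1, F2]) (p := ![a, b, c])
      (fun i _ => by
        fin_cases i
        · exact hF0m.aemeasurable
        · exact hF1m.aemeasurable
        · exact hF2m.aemeasurable)
      (by simp only [Fin.sum_univ_three, Matrix.cons_val_zero, Matrix.cons_val_one,
            Matrix.head_cons, Matrix.cons_val_two, Matrix.tail_cons]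
          rw [ha_def, hb_def, hc_def]; ring)
      (fun i _ => by
        fin_cases i
        · exact ha
        · exact hb
        · exact hc)
    simpa only [Fin.prod_univ_three, Matrix.cons_val_zero, Matrix.cons_val_one,
      Matrix.head_cons, Matrix.cons_val_two, Matrix.tail_cons, mul_assoc] using H
  -- put everything together
  have hC_bound : (‖∫ x, ∫ y, v x * k x y * u y ∂ν₂ ∂ν₁‖₊ : ℝ≥0∞)
      ≤ (ENNReal.ofReal M₁) ^ (r * a) * (ENNReal.ofReal M₂) ^ (r * b)
        * (eLpNorm v (ENNReal.ofReal q') μ * eLpNorm u (ENNReal.ofReal p) μ) := by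
    calc (‖∫ x, ∫ y, v x * k x y * u y ∂ν₂ ∂ν₁‖₊ : ℝ≥0∞)
        ≤ ∫⁻ x, (‖∫ y, v x * k x y * u y ∂ν₂‖₊ : ℝ≥0∞) ∂ν₁ :=
          enorm_integral_le_lintegral_enorm _
      _ ≤ ∫⁻ x, ∫⁻ y, (‖v x‖₊ : ℝ≥0∞) * ‖k x y‖₊ * ‖u y‖₊ ∂ν₂ ∂ν₁ := by
          refine lintegral_mono fun x => ?_
          refine le_trans (enorm_integral_le_lintegral_enorm _) (le_of_eq ?_)
          refine lintegral_congr fun y => ?_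
          simp [nnnorm_mul]; rfl
      _ = ∫⁻ z : X × X, (‖v z.1‖₊ : ℝ≥0∞) * ‖k z.1 z.2‖₊ * ‖u z.2‖₊ ∂(ν₁.prod ν₂) :=
          (lintegral_prod _ ((hVm.mul hKm).mul hUm).aemeasurable).symm
      _ ≤ (∫⁻ z, F0 z ∂(ν₁.prod ν₂)) ^ a *
          ((∫⁻ z, F1 z ∂(ν₁.prod ν₂)) ^ b * (∫⁻ z, F2 z ∂(ν₁.prod ν₂)) ^ c) := hHolder
      _ ≤ (K₁ * V) ^ a * ((K₂ * U) ^ b * (V * U) ^ c) :=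
          mul_le_mul' (ENNReal.rpow_le_rpow hE0 ha)
            (mul_le_mul' (ENNReal.rpow_le_rpow hE1 hb) (ENNReal.rpow_le_rpow hE2.le hc))
      _ = (ENNReal.ofReal M₁) ^ (r * a) * (ENNReal.ofReal M₂) ^ (r * b)
          * (V ^ (a + c) * U ^ (b + c)) := by
          rw [ENNReal.mul_rpow_of_nonneg _ _ ha, ENNReal.mul_rpow_of_nonneg _ _ hb,
            ENNReal.mul_rpow_of_nonneg _ _ hc, ENNReal.rpow_add_of_nonneg _ _ ha hc,
            ENNReal.rpow_add_of_nonneg _ _ hb hc, hK₁, hK₂, ← ENNReal.rpow_mul,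
            ← ENNReal.rpow_mul]
          ring
      _ ≤ (ENNReal.ofReal M₁) ^ (r * a) * (ENNReal.ofReal M₂) ^ (r * b)
          * (eLpNorm v (ENNReal.ofReal q') μ * eLpNorm u (ENNReal.ofReal p) μ) := by
          refine mul_le_mul_right (mul_le_mul' ?_ ?_) _
          · have hac : a + c = 1 / q' := by rw [ha_def, hc_def, hinvq']; ring
            have hVe : V ^ (a + c) = eLpNorm v (ENNReal.ofReal q') ν₁ := by
              rw [eLpNorm_eq_lintegral_rpow_enorm_toReal hq'ne0 ofReal_ne_top,
                ENNReal.toReal_ofReal hq'0.le, hac, hV]; rfl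
            rw [hVe]
            exact eLpNorm_mono_measure _ Measure.restrict_le_self
          · have hbc : b + c = 1 / p := by rw [hb_def, hc_def]; ring
            have hUe : U ^ (b + c) = eLpNorm u (ENNReal.ofReal p) ν₂ := by
              rw [eLpNorm_eq_lintegral_rpow_enorm_toReal hpne0 ofReal_ne_top,
                ENNReal.toReal_ofReal hp0.le, hbc, hU]; rfl
            rw [hUe]
            exact eLpNorm_mono_measure _ Measure.restrict_le_self
  have hCne : (ENNReal.ofReal M₁) ^ (r * a) * (ENNReal.ofReal M₂) ^ (r * b)
      * (eLpNorm v (ENNReal.ofReal q') μ * eLpNorm u (ENNReal.ofReal p) μ) ≠ ∞ :=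
    ENNReal.mul_ne_top
      (ENNReal.mul_ne_top (ENNReal.rpow_ne_top_of_nonneg (mul_nonneg hr0.le ha) ofReal_ne_top)
        (ENNReal.rpow_ne_top_of_nonneg (mul_nonneg hr0.le hb) ofReal_ne_top))
      (ENNReal.mul_ne_top hv.2.ne hu.2.ne)
  rw [h_ra, h_rb, hswitch]
  calc ‖∫ x, ∫ y, v x * k x y * u y ∂ν₂ ∂ν₁‖
      = ((‖∫ x, ∫ y, v x * k x y * u y ∂ν₂ ∂ν₁‖₊ : ℝ≥0∞)).toReal := by simp
    _ ≤ ((ENNReal.ofReal M₁) ^ (r * a) * (ENNReal.ofReal M₂) ^ (r * b)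
        * (eLpNorm v (ENNReal.ofReal q') μ * eLpNorm u (ENNReal.ofReal p) μ)).toReal :=
        ENNReal.toReal_mono hCne hC_bound
    _ = M₁ ^ (r * a) * M₂ ^ (r * b) * (eLpNorm v (ENNReal.ofReal q') μ).toReal
        * (eLpNorm u (ENNReal.ofReal p) μ).toReal := by
        rw [ENNReal.toReal_mul, ENNReal.toReal_mul, ENNReal.toReal_mul,
          ← ENNReal.toReal_rpow, ← ENNReal.toReal_rpow,
          ENNReal.toReal_ofReal hM₁0, ENNReal.toReal_ofReal hM₂0]
        ring

/-- Generalized Young/Schur inequality with mixed kernel norms: if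
`1 ≤ p ≤ r' < ∞` (with `1/r + 1/r' = 1`), `1 + 1/q = 1/p + 1/r`,
`1/q + 1/q' = 1`, and the kernel `k` satisfies
`ess-sup_x ‖k(x,·)‖_r ≤ M₁` and `ess-sup_y ‖k(·,y)‖_r ≤ M₂`, then
`|∬ v(x) k(x,y) u(y)| ≤ M₁^{r/q'−r/r'} M₂^{r/p−r/r'} ‖v‖_{q'} ‖u‖_p`. -/
theorem stmt_5 {X : Type*} [MeasurableSpace X] (μ : Measure X)
    (p q r r' q' : ℝ) (hp1 : 1 ≤ p) (hpr : p ≤ r') (hr1 : 1 < r)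
    (hrr' : 1 / r + 1 / r' = 1) (hqq' : 1 / q + 1 / q' = 1)
    (hq : 1 + 1 / q = 1 / p + 1 / r)
    (k : X → X → ℂ) (hk : Measurable (Function.uncurry k))
    (M₁ M₂ : ℝ) (hM₁0 : 0 ≤ M₁) (hM₂0 : 0 ≤ M₂)
    (hM₁ : ∀ᵐ x ∂μ, eLpNorm (fun y => k x y) (ENNReal.ofReal r) μ ≤ ENNReal.ofReal M₁)
    (hM₂ : ∀ᵐ y ∂μ, eLpNorm (fun x => k x y) (ENNReal.ofReal r) μ ≤ ENNReal.ofReal M₂)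
    (u v : X → ℂ) (hu : MemLp u (ENNReal.ofReal p) μ) (hv : MemLp v (ENNReal.ofReal q') μ) :
    ‖∫ x, ∫ y, v x * k x y * u y ∂μ ∂μ‖
      ≤ M₁ ^ (r / q' - r / r') * M₂ ^ (r / p - r / r')
          * (eLpNorm v (ENNReal.ofReal q') μ).toReal
          * (eLpNorm u (ENNReal.ofReal p) μ).toReal := by
  obtain ⟨u', hu'm, huu'⟩ : ∃ u', StronglyMeasurable u' ∧ u =ᵐ[μ] u' :=
    ⟨hu.1.mk u, hu.1.stronglyMeasurable_mk, hu.1.ae_eq_mk⟩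
  obtain ⟨v', hv'm, hvv'⟩ : ∃ v', StronglyMeasurable v' ∧ v =ᵐ[μ] v' :=
    ⟨hv.1.mk v, hv.1.stronglyMeasurable_mk, hv.1.ae_eq_mk⟩
  have hu' : MemLp u' (ENNReal.ofReal p) μ := (memLp_congr_ae huu').mp hu
  have hv' : MemLp v' (ENNReal.ofReal q') μ := (memLp_congr_ae hvv').mp hv
  have hL : ∫ x, ∫ y, v x * k x y * u y ∂μ ∂μ = ∫ x, ∫ y, v' x * k x y * u' y ∂μ ∂μ := by
    have h1 : ∀ x, ∫ y, v x * k x y * u y ∂μ = ∫ y, v x * k x y * u' y ∂μ := fun x =>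
      integral_congr_ae (by filter_upwards [huu'] with y hy; rw [hy])
    simp only [h1]
    refine integral_congr_ae ?_
    filter_upwards [hvv'] with x hx
    simp only [hx]
  rw [hL, eLpNorm_congr_ae huu', eLpNorm_congr_ae hvv']
  exact stmt_5_aux μ p q r r' q' hp1 hpr hr1 hrr' hqq' hq k hk M₁ M₂ hM₁0 hM₂0 hM₁ hM₂
    u' v' hu'm hv'm hu' hv'
end
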